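/- Let n ≥ 1, s ∈ (0,1), p ∈ [1,∞). Assume F : ℝ × (ℝⁿ∖{0}) → [0,∞) satisfies assumptions (2.1) and (2.5), and W : ℝ → [0,∞) is bounded. Let R > 0, φ ∈ X_R, and let u be a minimizer of E(·, B_R) with u = φ in CB_R. Then there exists C > 0 depending only on n, s, p, R such that E(u, B_R) ≤ C(‖φ‖^p_{W^{s,p}(B_{2R})} + ‖φ‖^p_{L^∞(CB_{2R})} + ‖W‖_{L^∞(ℝ)}). -/

import Mathlib

open MeasureTheory Metric Set Filter
open scoped ENNReal NNReal Topology RealInnerProductSpace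

noncomputable section

/-- `ℝⁿ` as a Euclidean space. -/
abbrev Euc (n : ℕ) : Type := EuclideanSpace ℝ (Fin n)

/-- The nonlocal (kinetic) part `K_Ω(u)` of the energy: the integral of
`F(u(x) - u(y), x - y)` over all pairs `(x, y)` with `x ∈ Ω` or `y ∈ Ω`. -/
def interaction (n : ℕ) (F : ℝ → Euc n → ℝ) (u : Euc n → ℝ) (Ω : Set (Euc n)) : ℝ≥0∞ :=
  ∫⁻ q in {q : Euc n × Euc n | q.1 ∈ Ω ∨ q.2 ∈ Ω},
    ENNReal.ofReal (F (u q.1 - u q.2) (q.1 - q.2))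

/-- The nonlocal energy `E(u, Ω) = K_Ω(u) + ∫_Ω W(u)`. -/
def energy (n : ℕ) (F : ℝ → Euc n → ℝ) (W : ℝ → ℝ) (u : Euc n → ℝ) (Ω : Set (Euc n)) :
    ℝ≥0∞ :=
  interaction n F u Ω + ∫⁻ x in Ω, ENNReal.ofReal (W (u x))

/-- `u` is a minimizer of `E(·, Ω)`: it has finite energy and its energy does not exceed the
energy of any competitor agreeing with `u` a.e. outside `Ω`. -/
def IsMinimizer (n : ℕ) (F : ℝ → Euc n → ℝ) (W : ℝ → ℝ) (u : Euc n → ℝ)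
    (Ω : Set (Euc n)) : Prop :=
  Measurable u ∧ energy n F W u Ω ≠ ⊤ ∧
    ∀ v : Euc n → ℝ, Measurable v → (∀ᵐ x ∂(volume.restrict Ωᶜ), v x = u x) →
      energy n F W u Ω ≤ energy n F W v Ω

/-- The `p`-th power of the Gagliardo seminorm `[u]_{W^{s,p}(Ω)}^p`. -/
def gagliardoP (n : ℕ) (s p : ℝ) (u : Euc n → ℝ) (Ω : Set (Euc n)) : ℝ≥0∞ :=
  ∫⁻ q in Ω ×ˢ Ω, ENNReal.ofReal (|u q.1 - u q.2| ^ p / ‖q.1 - q.2‖ ^ ((n : ℝ) + s * p))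

/-- Membership in the fractional Sobolev space `W^{s,p}(Ω)`. -/
def MemWsp (n : ℕ) (s p : ℝ) (u : Euc n → ℝ) (Ω : Set (Euc n)) : Prop :=
  MemLp u (ENNReal.ofReal p) (volume.restrict Ω) ∧ gagliardoP n s p u Ω ≠ ⊤

/-- The class `X_R` of admissible exterior data:
`φ ∈ L^∞(ℝⁿ)` with `φ ∈ W^{s,p}(B_{2R})`. -/
def MemX (n : ℕ) (s p R : ℝ) (φ : Euc n → ℝ) : Prop :=
  MemLp φ ⊤ (volume : Measure (Euc n)) ∧ MemWsp n s p φ (ball 0 (2 * R))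

/-- The quantity `[u]_{R,φ}^p`. -/
def bdryP (n : ℕ) (s p R : ℝ) (φ u : Euc n → ℝ) : ℝ≥0∞ :=
  ∫⁻ q in (ball (0 : Euc n) R) ×ˢ (ball (0 : Euc n) (2 * R) \ ball 0 R),
    ENNReal.ofReal (|u q.1 - φ q.2| ^ p / ‖q.1 - q.2‖ ^ ((n : ℝ) + s * p))

/-- The space `W^{s,p}_{R,φ}`: `u ∈ W^{s,p}(B_R)`, `[u]_{R,φ} < ∞` and `u = φ` on `CB_R`. -/
def MemWRphi (n : ℕ) (s p R : ℝ) (φ u : Euc n → ℝ) : Prop :=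
  MemWsp n s p u (ball 0 R) ∧ bdryP n s p R φ u ≠ ⊤ ∧ ∀ x ∉ ball (0 : Euc n) R, u x = φ x

/-- The `p`-th power of the `W^{s,p}(Ω)` norm, `‖u‖_{W^{s,p}(Ω)}^p = ‖u‖_{L^p(Ω)}^p + [u]_{W^{s,p}(Ω)}^p`. -/
def WspNormP (n : ℕ) (s p : ℝ) (u : Euc n → ℝ) (Ω : Set (Euc n)) : ℝ≥0∞ :=
  (∫⁻ x in Ω, ENNReal.ofReal (|u x| ^ p)) + gagliardoP n s p u Ω

section Helpers

variable {n : ℕ}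

lemma jap_finite {q : ℝ} (hq : (n : ℝ) < q) :
    (∫⁻ z : Euc n, ENNReal.ofReal ((1 + ‖z‖) ^ (-q))) < ∞ := by
  apply finite_integral_one_add_norm (E := Euc n) (μ := volume)
  rwa [finrank_euclideanSpace_fin]

lemma tail_pointwise {q R r : ℝ} (hq0 : 0 < q) (hR : 0 < R) (hr : R ≤ r) :
    r ^ (-q) ≤ (1 + 1/R) ^ q * (1 + r) ^ (-q) := by
  have hr0 : 0 < r := hR.trans_le hr
  have hb : (0:ℝ) < 1 + 1/R := by positivity
  have key : 1 + r ≤ (1 + 1/R) * r := by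
    have h1 : 1 ≤ r / R := (one_le_div hR).2 hr
    have : (1 + 1/R) * r = r + r / R := by ring
    rw [this]; nlinarith
  have h2 : ((1 + 1/R) * r) ^ (-q) ≤ (1 + r) ^ (-q) :=
    Real.rpow_le_rpow_of_nonpos (by positivity) key (neg_nonpos.2 hq0.le)
  have h3 : ((1 + 1/R) * r) ^ (-q) = (1 + 1/R) ^ (-q) * r ^ (-q) :=
    Real.mul_rpow hb.le hr0.le
  have h4 : (1 + 1/R) ^ q * (1 + 1/R) ^ (-q) = 1 := by
    rw [← Real.rpow_add hb]; simp
  calc r ^ (-q) = (1 + 1/R) ^ q * ((1 + 1/R) ^ (-q) * r ^ (-q)) := by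
        rw [← mul_assoc, h4, one_mul]
    _ ≤ (1 + 1/R) ^ q * (1 + r) ^ (-q) := by
        rw [← h3]; exact mul_le_mul_of_nonneg_left h2 (by positivity)

lemma lint_kernel_tail {q R : ℝ} (hq0 : 0 < q) (hR : 0 < R)
    (x : Euc n) {S : Set (Euc n)} (hS : ∀ y ∈ S, R ≤ ‖x - y‖) :
    ∫⁻ y in S, ENNReal.ofReal (‖x - y‖ ^ (-q)) ≤
      ENNReal.ofReal ((1 + 1/R) ^ q) * ∫⁻ z : Euc n, ENNReal.ofReal ((1 + ‖z‖) ^ (-q)) := by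
  have hmeas : Measurable fun y : Euc n => ENNReal.ofReal ((1 + 1/R) ^ q) *
      ENNReal.ofReal ((1 + ‖x - y‖) ^ (-q)) := by fun_prop
  calc ∫⁻ y in S, ENNReal.ofReal (‖x - y‖ ^ (-q))
      ≤ ∫⁻ y in S, ENNReal.ofReal ((1 + 1/R) ^ q) * ENNReal.ofReal ((1 + ‖x - y‖) ^ (-q)) := by
        refine setLIntegral_mono hmeas fun y hy => ?_
        rw [← ENNReal.ofReal_mul (by positivity)]
        exact ENNReal.ofReal_le_ofReal (tail_pointwise hq0 hR (hS y hy))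
    _ ≤ ∫⁻ y, ENNReal.ofReal ((1 + 1/R) ^ q) * ENNReal.ofReal ((1 + ‖x - y‖) ^ (-q)) :=
        setLIntegral_le_lintegral _ _
    _ = ENNReal.ofReal ((1 + 1/R) ^ q) * ∫⁻ y, ENNReal.ofReal ((1 + ‖x - y‖) ^ (-q)) :=
        lintegral_const_mul' _ _ ENNReal.ofReal_ne_top
    _ = ENNReal.ofReal ((1 + 1/R) ^ q) * ∫⁻ z : Euc n, ENNReal.ofReal ((1 + ‖z‖) ^ (-q)) := by
        congr 1
        have : ∀ y : Euc n, ‖x - y‖ = ‖y - x‖ := fun y => norm_sub_rev _ _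
        simp_rw [this]
        exact (measurePreserving_sub_right volume x).lintegral_comp
          (f := fun z : Euc n => ENNReal.ofReal ((1 + ‖z‖) ^ (-q))) (by fun_prop)

lemma finite_ball_rpow {a R : ℝ} (ha0 : 0 < a) (han : a < n) (hR : 0 < R) :
    ∫⁻ z in ball (0 : Euc n) R, ENNReal.ofReal (‖z‖ ^ (-a)) < ∞ := by
  set μ := (volume : Measure (Euc n)).restrict (ball (0 : Euc n) R) with hμ
  have hnn : 0 ≤ᵐ[μ] fun z : Euc n => ‖z‖ ^ (-a) :=
    Eventually.of_forall fun z => Real.rpow_nonneg (norm_nonneg z) _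
  have hmeas : Measurable fun z : Euc n => ‖z‖ ^ (-a) := by fun_prop
  rw [show ∫⁻ z in ball (0 : Euc n) R, ENNReal.ofReal (‖z‖ ^ (-a)) =
      ∫⁻ z, ENNReal.ofReal (‖z‖ ^ (-a)) ∂μ from rfl,
    lintegral_eq_lintegral_meas_le μ hnn hmeas.aemeasurable]
  have hsub : ∀ t : ℝ, 1 < t →
      {z : Euc n | t ≤ ‖z‖ ^ (-a)} ⊆ closedBall 0 (t ^ (-a⁻¹)) := by
    intro t ht z hz
    simp only [mem_setOf_eq] at hz
    rcases eq_or_ne z 0 with rfl | hz0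
    · simp only [norm_zero] at hz
      rw [Real.zero_rpow (by simpa using ha0.ne')] at hz
      linarith
    · have hz0' : 0 < ‖z‖ := norm_pos_iff.2 hz0
      have h1 : (‖z‖ ^ (-a)) ^ (-a⁻¹) ≤ t ^ (-a⁻¹) :=
        Real.rpow_le_rpow_of_nonpos (by linarith) hz
          (neg_nonpos.2 (inv_nonneg.2 ha0.le))
      have h2 : (‖z‖ ^ (-a)) ^ (-a⁻¹) = ‖z‖ := by
        rw [← Real.rpow_mul (norm_nonneg z)]
        rw [show (-a) * (-a⁻¹) = a * a⁻¹ by ring, mul_inv_cancel₀ ha0.ne', Real.rpow_one]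
      rw [mem_closedBall, dist_zero_right]
      rw [h2] at h1
      exact h1
  calc ∫⁻ t in Ioi (0:ℝ), μ {z | t ≤ ‖z‖ ^ (-a)}
      ≤ ∫⁻ t in Ioc (0:ℝ) 1 ∪ Ioi 1, μ {z | t ≤ ‖z‖ ^ (-a)} :=
        lintegral_mono_set Ioi_subset_Ioc_union_Ioi
    _ ≤ (∫⁻ t in Ioc (0:ℝ) 1, μ {z | t ≤ ‖z‖ ^ (-a)}) +
        ∫⁻ t in Ioi (1:ℝ), μ {z | t ≤ ‖z‖ ^ (-a)} := lintegral_union_le _ _ _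
    _ < ∞ := by
        refine ENNReal.add_lt_top.2 ⟨?_, ?_⟩
        · calc ∫⁻ t in Ioc (0:ℝ) 1, μ {z | t ≤ ‖z‖ ^ (-a)}
              ≤ ∫⁻ _t in Ioc (0:ℝ) 1, volume (ball (0 : Euc n) R) :=
                lintegral_mono fun t => le_trans (measure_mono (subset_univ _))
                  (le_of_eq (by rw [hμ, Measure.restrict_apply_univ]))
            _ = volume (ball (0 : Euc n) R) * volume (Ioc (0:ℝ) 1) := setLIntegral_const _ _
            _ < ∞ := ENNReal.mul_lt_top measure_ball_lt_top (by simp)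
        · have he : -(a⁻¹ * n) < -1 := by
            have : (1:ℝ) < a⁻¹ * n := by
              rw [← div_eq_inv_mul]
              exact (one_lt_div ha0).2 han
            linarith
          calc ∫⁻ t in Ioi (1:ℝ), μ {z | t ≤ ‖z‖ ^ (-a)}
              ≤ ∫⁻ t in Ioi (1:ℝ),
                  ENNReal.ofReal (t ^ (-(a⁻¹ * n))) * volume (ball (0 : Euc n) 1) := by
                refine setLIntegral_mono' measurableSet_Ioi fun t ht => ?_
                have ht1 : (1:ℝ) < t := ht
                have h0t : (0:ℝ) < t := by linarith
                calc μ {z | t ≤ ‖z‖ ^ (-a)}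
                    ≤ μ (closedBall 0 (t ^ (-a⁻¹))) := measure_mono (hsub t ht1)
                  _ ≤ volume (closedBall (0 : Euc n) (t ^ (-a⁻¹))) := by
                      rw [hμ, Measure.restrict_apply measurableSet_closedBall]
                      exact measure_mono inter_subset_left
                  _ = ENNReal.ofReal ((t ^ (-a⁻¹)) ^ Module.finrank ℝ (Euc n)) *
                      volume (ball (0 : Euc n) 1) :=
                      Measure.addHaar_closedBall _ _ (Real.rpow_nonneg h0t.le _)
                  _ = ENNReal.ofReal (t ^ (-(a⁻¹ * n))) * volume (ball (0 : Euc n) 1) := by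
                      congr 2
                      rw [← Real.rpow_natCast (t ^ (-a⁻¹)), ← Real.rpow_mul h0t.le,
                        finrank_euclideanSpace_fin]
                      ring_nf
            _ = (∫⁻ t in Ioi (1:ℝ), ENNReal.ofReal (t ^ (-(a⁻¹ * n)))) *
                volume (ball (0 : Euc n) 1) :=
                lintegral_mul_const' _ _ measure_ball_lt_top.ne
            _ < ∞ := ENNReal.mul_lt_top
                ((integrableOn_Ioi_rpow_of_lt he one_pos).setLIntegral_lt_top)
                measure_ball_lt_top

lemma add_rpow_le {p : ℝ} (hp : 0 ≤ p) (a b : ℝ≥0∞) :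
    (a + b) ^ p ≤ 2 ^ p * (a ^ p + b ^ p) := by
  have h1 : a + b ≤ 2 * max a b := by
    rw [two_mul]
    exact add_le_add (le_max_left _ _) (le_max_right _ _)
  calc (a + b) ^ p ≤ (2 * max a b) ^ p := ENNReal.rpow_le_rpow h1 hp
    _ = 2 ^ p * (max a b) ^ p := ENNReal.mul_rpow_of_nonneg _ _ hp
    _ ≤ 2 ^ p * (a ^ p + b ^ p) := by
        gcongr
        rcases max_cases a b with ⟨h, _⟩ | ⟨h, _⟩ <;> rw [h]
        · exact le_self_add
        · exact le_add_self

lemma ae_prod_fst {α β : Type*} [MeasurableSpace α] [MeasurableSpace β]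
    {μ : Measure α} {ν : Measure β} [SFinite μ] [SFinite ν] {P : α → Prop}
    (h : ∀ᵐ x ∂μ, P x) : ∀ᵐ q : α × β ∂(μ.prod ν), P q.1 := by
  rw [ae_iff] at h ⊢
  obtain ⟨t, hsub, htm, ht0⟩ := exists_measurable_superset_of_null h
  refine measure_mono_null (fun q hq => ?_) (?_ : μ.prod ν (t ×ˢ univ) = 0)
  · exact ⟨hsub hq, mem_univ _⟩
  · rw [Measure.prod_prod, ht0, zero_mul]

lemma ae_prod_snd {α β : Type*} [MeasurableSpace α] [MeasurableSpace β]
    {μ : Measure α} {ν : Measure β} [SFinite μ] [SFinite ν] {P : β → Prop}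
    (h : ∀ᵐ y ∂ν, P y) : ∀ᵐ q : α × β ∂(μ.prod ν), P q.2 := by
  rw [ae_iff] at h ⊢
  obtain ⟨t, hsub, htm, ht0⟩ := exists_measurable_superset_of_null h
  refine measure_mono_null (fun q hq => ?_) (?_ : μ.prod ν (univ ×ˢ t) = 0)
  · exact ⟨mem_univ _, hsub hq⟩
  · rw [Measure.prod_prod, ht0, mul_zero]

lemma lintegral_swap_prod_set {A B : Set (Euc n)}
    {f : Euc n × Euc n → ℝ≥0∞} (hf : Measurable f) (hsym : ∀ q : Euc n × Euc n, f q.swap = f q) :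
    ∫⁻ q in A ×ˢ B, f q = ∫⁻ q in B ×ˢ A, f q := by
  rw [Measure.volume_eq_prod, ← Measure.prod_restrict, ← Measure.prod_restrict]
  calc ∫⁻ q, f q ∂(volume.restrict A).prod (volume.restrict B)
      = ∫⁻ q, f q.swap ∂(volume.restrict A).prod (volume.restrict B) :=
        lintegral_congr fun q => (hsym q).symm
    _ = ∫⁻ q, f q ∂(volume.restrict B).prod (volume.restrict A) :=
        Measure.measurePreserving_swap.lintegral_comp hf

lemma good_c_exists {T : Set ℝ} (hTm : MeasurableSet T) (hT0 : volume T = 0)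
    {ψ : Euc n → ℝ} (hψ : Measurable ψ) {η : Euc n → ℝ} (hη : Measurable η)
    {A : Set (Euc n)} (hAm : MeasurableSet A) (hηpos : ∀ x ∈ A, η x ≠ 0)
    {t : ℝ} (ht : 0 < t) :
    ∃ c : ℝ, 0 < c ∧ c < t ∧
      ∀ᵐ x ∂(volume : Measure (Euc n)), x ∈ A → ψ x + c * η x ∉ T := by
  set S : Set (ℝ × Euc n) := {z | z.2 ∈ A ∧ ψ z.2 + z.1 * η z.2 ∈ T} with hS
  have hfm : Measurable fun z : ℝ × Euc n => ψ z.2 + z.1 * η z.2 :=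
    (hψ.comp measurable_snd).add (measurable_fst.mul (hη.comp measurable_snd))
  have hSm : MeasurableSet S := (hAm.preimage measurable_snd).inter (hfm hTm)
  have hfiber : ∀ x : Euc n, volume ((fun c : ℝ => (c, x)) ⁻¹' S) = 0 := by
    intro x
    by_cases hxA : x ∈ A
    · have hsub : ((fun c : ℝ => (c, x)) ⁻¹' S) ⊆ (fun c : ℝ => ψ x + c * η x) ⁻¹' T :=
        fun c hc => hc.2
      refine measure_mono_null hsub ?_
      have hcomp : (fun c : ℝ => ψ x + c * η x) = (fun y : ℝ => ψ x + y) ∘ (· * η x) := rfl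
      rw [hcomp, preimage_comp, Real.volume_preimage_mul_right (hηpos x hxA)]
      have : volume ((fun y : ℝ => ψ x + y) ⁻¹' T) = 0 := by
        rw [show (fun y : ℝ => ψ x + y) = (ψ x + ·) from rfl, measure_preimage_add, hT0]
      rw [this, mul_zero]
    · have : ((fun c : ℝ => (c, x)) ⁻¹' S) = ∅ := by
        ext c; simp only [mem_preimage, hS, mem_setOf_eq, mem_empty_iff_false, iff_false]
        exact fun h => hxA h.1
      rw [this, measure_empty]
  have hS0 : (volume.prod volume) S = 0 := by
    rw [Measure.prod_apply_symm hSm]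
    simp [hfiber]
  have hae : ∀ᵐ z : ℝ × Euc n ∂(volume.prod volume), z ∉ S := by
    rw [ae_iff]
    convert hS0 using 2
    ext z; simp
  have hcc := Measure.ae_ae_of_ae_prod hae
  rw [ae_iff] at hcc
  set N := {c : ℝ | ¬ ∀ᵐ x ∂(volume : Measure (Euc n)), (c, x) ∉ S} with hN
  have hgood : volume (Ioo 0 t \ toMeasurable volume N) = volume (Ioo 0 t) :=
    measure_diff_null (by rw [measure_toMeasurable]; exact hcc)
  have hpos : volume (Ioo 0 t \ toMeasurable volume N) ≠ 0 := by
    rw [hgood, Real.volume_Ioo]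
    simpa using ht
  obtain ⟨c, hcmem, hcN⟩ := nonempty_of_measure_ne_zero hpos
  refine ⟨c, hcmem.1, hcmem.2, ?_⟩
  have : ∀ᵐ x ∂(volume : Measure (Euc n)), (c, x) ∉ S := by
    by_contra hcon
    exact hcN (subset_toMeasurable _ _ hcon)
  filter_upwards [this] with x hx hxA hxT
  exact hx ⟨hxA, hxT⟩

end Helpers

set_option maxHeartbeats 2000000 in
/-- **Proposition 3 (1)**: a minimizer `u` of `E(·, B_R)` with exterior datum `φ ∈ X_R` has
energy bounded by `C (‖φ‖_{W^{s,p}(B_{2R})}^p + ‖φ‖_{L^∞(CB_{2R})}^p + ‖W‖_{L^∞(ℝ)})`,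
with `C = C(n, s, p, R) > 0`. -/
theorem minimizer_energy_bound
    (n : ℕ) (hn : 1 ≤ n) (s p : ℝ) (hs : s ∈ Ioo (0 : ℝ) 1) (hp : 1 ≤ p)
    (F : ℝ → Euc n → ℝ) (W : ℝ → ℝ)
    (hF_nonneg : ∀ (t : ℝ) (x : Euc n), 0 ≤ F t x)
    (hW_nonneg : ∀ t : ℝ, 0 ≤ W t)
    (hW_bdd : BddAbove (Set.range W))
    -- (2.1) symmetry
    (h21 : ∀ (t : ℝ) (x : Euc n), x ≠ 0 → F t x = F (-t) x ∧ F (-t) x = F (-t) (-x))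
    -- (2.5) integrability
    (h25 : ∃ cs cS : ℝ, 0 < cs ∧ 0 < cS ∧ ∀ (t : ℝ) (x : Euc n), x ≠ 0 →
      cs * (|t| ^ p / ‖x‖ ^ ((n : ℝ) + s * p) - 1 / ‖x‖ ^ ((n : ℝ) + s * p - p)) ≤ F t x ∧
      F t x ≤ cS * (|t| ^ p / ‖x‖ ^ ((n : ℝ) + s * p)))
    (R : ℝ) (hR : 0 < R) :
    ∃ C : ℝ, 0 < C ∧ ∀ (φ u : Euc n → ℝ), MemX n s p R φ →
      IsMinimizer n F W u (ball 0 R) → (∀ x ∉ ball (0 : Euc n) R, u x = φ x) →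
      energy n F W u (ball 0 R) ≤ ENNReal.ofReal C *
        (WspNormP n s p φ (ball 0 (2 * R)) +
          (eLpNorm φ ⊤ (volume.restrict (ball (0 : Euc n) (2 * R))ᶜ)) ^ p +
          eLpNorm W ⊤ (volume : Measure ℝ)) := by
  obtain ⟨hs0, hs1⟩ := hs
  obtain ⟨cs, cS, hcs, hcS, hFb⟩ := h25
  haveI : Nonempty (Fin n) := ⟨⟨0, hn⟩⟩
  haveI : Nontrivial (Euc n) := inferInstance
  have hp0 : (0:ℝ) < p := lt_of_lt_of_le one_pos hp
  set q : ℝ := (n : ℝ) + s * p with hqdef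
  have hsp : (0:ℝ) < s * p := mul_pos hs0 hp0
  have hq0 : 0 < q := lt_of_lt_of_le hsp (le_add_of_nonneg_left (Nat.cast_nonneg n))
  have hnq : (n : ℝ) < q := lt_add_of_pos_right _ hsp
  -- kernel
  set k : Euc n → ℝ≥0∞ := fun z => ENNReal.ofReal (‖z‖ ^ (-q)) with hk
  have hkm : Measurable k := by fun_prop
  set Jq : ℝ≥0∞ := ∫⁻ z : Euc n, ENNReal.ofReal ((1 + ‖z‖) ^ (-q)) with hJq
  have hJqfin : Jq < ∞ := jap_finite hnq
  set κ : ℝ≥0∞ := ENNReal.ofReal ((1 + 1/R) ^ q) * Jq with hκ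
  have hκfin : κ ≠ ∞ := (ENNReal.mul_lt_top ENNReal.ofReal_lt_top hJqfin).ne
  set volB : ℝ≥0∞ := volume (ball (0 : Euc n) R) with hvolB
  have hvolBfin : volB ≠ ∞ := measure_ball_lt_top.ne
  set t2 : ℝ≥0∞ := (2:ℝ≥0∞) ^ p with ht2
  have ht2fin : t2 ≠ ∞ := ENNReal.rpow_ne_top_of_nonneg hp0.le (by norm_num)
  -- finiteness of the η-kernel integral
  set JG : ℝ≥0∞ := ∫⁻ z : Euc n, ENNReal.ofReal ((min ‖z‖ R) ^ p) * k z with hJGdef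
  have hJGfin : JG < ∞ := by
    have hmm : Measurable fun z : Euc n => ENNReal.ofReal ((min ‖z‖ R) ^ p) * k z := by
      fun_prop
    rw [hJGdef, ← lintegral_add_compl (μ := (volume : Measure (Euc n)))
      (fun z : Euc n => ENNReal.ofReal ((min ‖z‖ R) ^ p) * k z)
      (measurableSet_ball (x := (0 : Euc n)) (ε := R))]
    refine ENNReal.add_lt_top.2 ⟨?_, ?_⟩
    · -- near the origin
      have hptw : ∀ z ∈ ball (0 : Euc n) R,
          ENNReal.ofReal ((min ‖z‖ R) ^ p) * k z ≤ ENNReal.ofReal (‖z‖ ^ (p - q)) := by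
        intro z hz
        have hzR : ‖z‖ < R := by rwa [mem_ball, dist_zero_right] at hz
        rw [min_eq_left hzR.le]
        rcases eq_or_ne z 0 with rfl | hz0
        · simp [Real.zero_rpow hp0.ne']
        · have hz0' : 0 < ‖z‖ := norm_pos_iff.2 hz0
          rw [hk, ← ENNReal.ofReal_mul (Real.rpow_nonneg (norm_nonneg z) p),
            ← Real.rpow_add hz0']
          exact le_of_eq (by ring_nf)
      calc ∫⁻ z in ball (0 : Euc n) R, ENNReal.ofReal ((min ‖z‖ R) ^ p) * k z
          ≤ ∫⁻ z in ball (0 : Euc n) R, ENNReal.ofReal (‖z‖ ^ (p - q)) :=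
            setLIntegral_mono' measurableSet_ball hptw
        _ < ∞ := by
            rcases le_or_gt (q - p) 0 with hqp | hqp
            · have hb : ∀ z ∈ ball (0 : Euc n) R,
                  ENNReal.ofReal (‖z‖ ^ (p - q)) ≤ ENNReal.ofReal ((1 + R) ^ (p - q) + 1) := by
                intro z hz
                have hzR : ‖z‖ < R := by rwa [mem_ball, dist_zero_right] at hz
                refine ENNReal.ofReal_le_ofReal ?_
                have hpq : 0 ≤ p - q := by linarith
                have h1R : (0:ℝ) ≤ (1 + R) ^ (p - q) := Real.rpow_nonneg (by linarith) _
                rcases le_or_gt ‖z‖ 1 with hz1 | hz1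
                · have h := Real.rpow_le_rpow (norm_nonneg z) hz1 hpq
                  rw [Real.one_rpow] at h
                  linarith
                · have h := Real.rpow_le_rpow (norm_nonneg z) (by linarith : ‖z‖ ≤ 1 + R) hpq
                  have h1 : (0:ℝ) ≤ (1:ℝ) := by norm_num
                  linarith
              calc ∫⁻ z in ball (0 : Euc n) R, ENNReal.ofReal (‖z‖ ^ (p - q))
                  ≤ ∫⁻ _z in ball (0 : Euc n) R, ENNReal.ofReal ((1 + R) ^ (p - q) + 1) :=
                    setLIntegral_mono' measurableSet_ball hb
                _ = ENNReal.ofReal ((1 + R) ^ (p - q) + 1) * volume (ball (0 : Euc n) R) :=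
                    setLIntegral_const _ _
                _ < ∞ := ENNReal.mul_lt_top ENNReal.ofReal_lt_top measure_ball_lt_top
            · have han : q - p < n := by nlinarith
              have := finite_ball_rpow (n := n) hqp han hR
              rw [show p - q = -(q - p) by ring]
              exact this
    · -- away from the origin
      have hcongr : ∀ z ∈ (ball (0 : Euc n) R)ᶜ,
          ENNReal.ofReal ((min ‖z‖ R) ^ p) * k z = ENNReal.ofReal (R ^ p) * k z := by
        intro z hz
        have hzR : R ≤ ‖z‖ := by
          rw [mem_compl_iff, mem_ball, dist_zero_right, not_lt] at hz; exact hz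
        rw [min_eq_right hzR]
      calc ∫⁻ z in (ball (0 : Euc n) R)ᶜ, ENNReal.ofReal ((min ‖z‖ R) ^ p) * k z
          = ∫⁻ z in (ball (0 : Euc n) R)ᶜ, ENNReal.ofReal (R ^ p) * k z :=
            setLIntegral_congr_fun measurableSet_ball.compl hcongr
        _ = ENNReal.ofReal (R ^ p) * ∫⁻ z in (ball (0 : Euc n) R)ᶜ, k z :=
            lintegral_const_mul' _ _ ENNReal.ofReal_ne_top
        _ ≤ ENNReal.ofReal (R ^ p) * κ := by
            gcongr
            have h := lint_kernel_tail (n := n) hq0 hR (0 : Euc n)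
              (S := (ball (0 : Euc n) R)ᶜ) ?_
            · simp only [zero_sub, norm_neg] at h
              exact h.trans_eq rfl
            · intro y hy
              rw [mem_compl_iff, mem_ball, dist_zero_right, not_lt] at hy
              simpa using hy
        _ < ∞ := ENNReal.mul_lt_top ENNReal.ofReal_lt_top hκfin.lt_top
  -- the final constant
  set 𝒞 : ℝ≥0∞ := ENNReal.ofReal cS * t2 * (1 + 2 * (t2 * (κ + κ * volB))) + volB with h𝒞
  have h𝒞fin : 𝒞 ≠ ∞ := by
    rw [h𝒞]
    refine (ENNReal.add_lt_top.2 ⟨?_, hvolBfin.lt_top⟩).ne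
    refine ENNReal.mul_lt_top (ENNReal.mul_lt_top ENNReal.ofReal_lt_top ht2fin.lt_top) ?_
    refine ENNReal.add_lt_top.2 ⟨ENNReal.one_lt_top, ?_⟩
    refine ENNReal.mul_lt_top (by norm_num) ?_
    refine ENNReal.mul_lt_top ht2fin.lt_top ?_
    exact ENNReal.add_lt_top.2 ⟨hκfin.lt_top, ENNReal.mul_lt_top hκfin.lt_top hvolBfin.lt_top⟩
  refine ⟨𝒞.toReal + 1, by positivity, ?_⟩
  intro φ u hφ hmin hub
  set Ssum : ℝ≥0∞ := WspNormP n s p φ (ball 0 (2 * R)) +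
      (eLpNorm φ ⊤ (volume.restrict (ball (0 : Euc n) (2 * R))ᶜ)) ^ p +
      eLpNorm W ⊤ (volume : Measure ℝ) with hSsum
  suffices hE : energy n F W u (ball 0 R) ≤ 𝒞 * Ssum by
    refine hE.trans (mul_le_mul_left ?_ _)
    calc 𝒞 = ENNReal.ofReal 𝒞.toReal := (ENNReal.ofReal_toReal h𝒞fin).symm
      _ ≤ ENNReal.ofReal (𝒞.toReal + 1) := ENNReal.ofReal_le_ofReal (by linarith)
  obtain ⟨hφLinf, hφW⟩ := hφ
  have hφaem := hφLinf.aestronglyMeasurable.aemeasurable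
  set ψ : Euc n → ℝ := hφaem.mk φ with hψdef
  have hψm : Measurable ψ := hφaem.measurable_mk
  have hψae : φ =ᵐ[(volume : Measure (Euc n))] ψ := hφaem.ae_eq_mk
  set η : Euc n → ℝ := fun x => max (R - ‖x‖) 0 with hηdef
  have hηm : Measurable η := by fun_prop
  have hη0 : ∀ x ∉ ball (0 : Euc n) R, η x = 0 := by
    intro x hx
    rw [mem_ball, dist_zero_right, not_lt] at hx
    simp only [hηdef]
    exact max_eq_right (by linarith)
  have hηne : ∀ x ∈ ball (0 : Euc n) R, η x ≠ 0 := by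
    intro x hx
    rw [mem_ball, dist_zero_right] at hx
    have : 0 < η x := by
      simp only [hηdef]
      exact lt_max_iff.2 (Or.inl (by linarith))
    exact this.ne'
  have hηbd : ∀ x y : Euc n, |η x - η y| ≤ min ‖x - y‖ R := by
    intro x y
    refine le_min ?_ ?_
    · calc |η x - η y| ≤ |(R - ‖x‖) - (R - ‖y‖)| := abs_max_sub_max_le_abs _ _ _
        _ = |‖x‖ - ‖y‖| := by
            rw [show (R - ‖x‖) - (R - ‖y‖) = -(‖x‖ - ‖y‖) by ring, abs_neg]
        _ ≤ ‖x - y‖ := abs_norm_sub_norm_le x y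
    · have h1 : 0 ≤ η x := le_max_right _ _
      have h2 : 0 ≤ η y := le_max_right _ _
      have h3 : η x ≤ R := max_le (by linarith [norm_nonneg x]) hR.le
      have h4 : η y ≤ R := max_le (by linarith [norm_nonneg y]) hR.le
      rw [abs_sub_le_iff]
      constructor <;> linarith
  -- the potential term
  set MW : ℝ≥0∞ := eLpNorm W ⊤ (volume : Measure ℝ) with hMW
  have hWae : ∀ᵐ t : ℝ ∂(volume : Measure ℝ), ENNReal.ofReal (W t) ≤ MW := by
    have h1 : ∀ᵐ t : ℝ ∂(volume : Measure ℝ), (‖W t‖₊ : ℝ≥0∞) ≤ eLpNormEssSup W volume :=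
      ae_le_eLpNormEssSup
    rw [hMW, eLpNorm_exponent_top]
    filter_upwards [h1] with t ht
    rwa [← Real.enorm_eq_ofReal (hW_nonneg t)]
  obtain ⟨T, hTsub, hTm, hT0⟩ := exists_measurable_superset_of_null (ae_iff.1 hWae)
  have hWle : ∀ t : ℝ, t ∉ T → ENNReal.ofReal (W t) ≤ MW := by
    intro t ht
    by_contra hcon
    exact ht (hTsub (by simpa using hcon))
  -- the exterior L∞ norm
  set Mext : ℝ≥0∞ := eLpNorm φ ⊤ (volume.restrict (ball (0 : Euc n) (2 * R))ᶜ) with hMext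
  have hMextfin : Mext ≠ ∞ := by
    rw [hMext]
    exact ((eLpNorm_mono_measure φ Measure.restrict_le_self).trans_lt hφLinf.2).ne
  have hMext_ae : ∀ᵐ y ∂(volume.restrict (ball (0 : Euc n) (2 * R))ᶜ),
      ENNReal.ofReal |ψ y| ≤ Mext := by
    have h1 : ∀ᵐ y ∂(volume.restrict (ball (0 : Euc n) (2 * R))ᶜ), (‖φ y‖₊ : ℝ≥0∞) ≤
        eLpNormEssSup φ (volume.restrict (ball (0 : Euc n) (2 * R))ᶜ) := ae_le_eLpNormEssSup
    rw [hMext, eLpNorm_exponent_top]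
    filter_upwards [h1, ae_restrict_of_ae hψae] with y h1y h2y
    rw [← h2y, ← Real.enorm_eq_ofReal_abs]
    exact h1y
  -- conversions
  have hofp : ∀ t : ℝ, ENNReal.ofReal (|t| ^ p) = ENNReal.ofReal |t| ^ p := fun t =>
    (ENNReal.ofReal_rpow_of_nonneg (abs_nonneg t) hp0.le).symm
  have hdiv : ∀ A : ℝ, 0 ≤ A → ∀ z : Euc n,
      ENNReal.ofReal (A / ‖z‖ ^ q) = ENNReal.ofReal A * k z := by
    intro A hA z
    simp only [hk]
    rw [div_eq_mul_inv, ← Real.rpow_neg (norm_nonneg z), ENNReal.ofReal_mul hA]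
  -- the ψ-part integrand
  set fψ : Euc n × Euc n → ℝ≥0∞ :=
    fun z => ENNReal.ofReal (|ψ z.1 - ψ z.2| ^ p) * k (z.1 - z.2) with hfψ
  have hfψm : Measurable fψ := by
    refine Measurable.mul (Measurable.ennreal_ofReal (by fun_prop)) ?_
    exact hkm.comp (measurable_fst.sub measurable_snd)
  have hfψsym : ∀ z : Euc n × Euc n, fψ z.swap = fψ z := by
    intro z
    simp only [hfψ, hk, Prod.fst_swap, Prod.snd_swap]
    rw [abs_sub_comm (ψ z.2) (ψ z.1), norm_sub_rev z.2 z.1]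
  -- the kernel tail bound
  have hker : ∀ x ∈ ball (0 : Euc n) R,
      (∫⁻ y in (ball (0 : Euc n) (2 * R))ᶜ, k (x - y)) ≤ κ := by
    intro x hx
    rw [mem_ball, dist_zero_right] at hx
    refine le_trans (le_of_eq ?_) (lint_kernel_tail (n := n) hq0 hR x
      (S := (ball (0 : Euc n) (2 * R))ᶜ) ?_)
    · simp only [hk]
    · intro y hy
      rw [mem_compl_iff, mem_ball, dist_zero_right, not_lt] at hy
      have h1 : ‖y‖ - ‖x‖ ≤ ‖y - x‖ := norm_sub_norm_le y x
      rw [norm_sub_rev x y]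
      linarith
  -- main quantities
  set G : ℝ≥0∞ := gagliardoP n s p φ (ball 0 (2 * R)) with hG
  set Lp2 : ℝ≥0∞ := ∫⁻ x in ball (0 : Euc n) (2 * R), ENNReal.ofReal (|φ x| ^ p) with hLp2
  set X : ℝ≥0∞ := ENNReal.ofReal cS * t2 *
      (G + 2 * (t2 * (κ * Lp2 + Mext ^ p * (κ * volB)))) + MW * volB with hX
  set Y : ℝ≥0∞ := ENNReal.ofReal cS * t2 * (2 * (JG * volB)) with hY
  -- the set of interacting pairs
  set D : Set (Euc n × Euc n) :=
    {z : Euc n × Euc n | z.1 ∈ ball 0 R ∨ z.2 ∈ ball 0 R} with hD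
  -- the diagonal is null
  have hne : ∀ᵐ z : Euc n × Euc n ∂(volume : Measure (Euc n × Euc n)), z.1 ≠ z.2 := by
    rw [ae_iff]
    have hdm : MeasurableSet {z : Euc n × Euc n | z.1 = z.2} :=
      measurableSet_eq_fun measurable_fst measurable_snd
    have : ∀ x : Euc n, (Prod.mk x ⁻¹' {z : Euc n × Euc n | z.1 = z.2}) = {x} := by
      intro x; ext y; simp [eq_comm]
    rw [show {a : Euc n × Euc n | ¬a.1 ≠ a.2} = {z : Euc n × Euc n | z.1 = z.2} by
      ext z; simp, Measure.volume_eq_prod, Measure.prod_apply hdm]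
    simp [this, measure_singleton]
  -- a.e. congruence between φ and ψ on products
  have hae1 : ∀ᵐ z : Euc n × Euc n ∂(volume : Measure (Euc n × Euc n)), φ z.1 = ψ z.1 := by
    rw [Measure.volume_eq_prod]; exact ae_prod_fst hψae
  have hae2 : ∀ᵐ z : Euc n × Euc n ∂(volume : Measure (Euc n × Euc n)), φ z.2 = ψ z.2 := by
    rw [Measure.volume_eq_prod]; exact ae_prod_snd hψae
  -- Term 1 : the Gagliardo seminorm over B2 × B2
  have hT1 : (∫⁻ z in ball (0 : Euc n) (2 * R) ×ˢ ball (0 : Euc n) (2 * R), fψ z) = G := by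
    rw [hG, gagliardoP, ← hqdef]
    have hptw : ∀ z : Euc n × Euc n,
        ENNReal.ofReal (|φ z.1 - φ z.2| ^ p / ‖z.1 - z.2‖ ^ q) =
          ENNReal.ofReal (|φ z.1 - φ z.2| ^ p) * k (z.1 - z.2) := fun z =>
      hdiv _ (Real.rpow_nonneg (abs_nonneg _) _) _
    simp_rw [hptw]
    refine lintegral_congr_ae (ae_restrict_of_ae ?_)
    filter_upwards [hae1, hae2] with z h1 h2
    simp only [hfψ]
    rw [h1, h2]
  -- Term 2 : B_R × (B_2R)ᶜ
  have hAm : Measurable fun z : Euc n × Euc n =>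
      ENNReal.ofReal (|ψ z.1| ^ p) * k (z.1 - z.2) := by
    refine Measurable.mul (Measurable.ennreal_ofReal (by fun_prop)) ?_
    exact hkm.comp (measurable_fst.sub measurable_snd)
  have hBm : Measurable fun z : Euc n × Euc n =>
      ENNReal.ofReal (|ψ z.2| ^ p) * k (z.1 - z.2) := by
    refine Measurable.mul (Measurable.ennreal_ofReal (by fun_prop)) ?_
    exact hkm.comp (measurable_fst.sub measurable_snd)
  have hSA : (∫⁻ z in ball (0 : Euc n) R ×ˢ (ball (0 : Euc n) (2 * R))ᶜ,
      ENNReal.ofReal (|ψ z.1| ^ p) * k (z.1 - z.2)) ≤ κ * Lp2 := by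
    rw [Measure.volume_eq_prod, ← Measure.prod_restrict, lintegral_prod _ hAm.aemeasurable]
    calc ∫⁻ x, (∫⁻ y, ENNReal.ofReal (|ψ x| ^ p) * k (x - y)
            ∂(volume.restrict (ball (0 : Euc n) (2 * R))ᶜ))
          ∂(volume.restrict (ball (0 : Euc n) R))
        = ∫⁻ x, ENNReal.ofReal (|ψ x| ^ p) *
            (∫⁻ y in (ball (0 : Euc n) (2 * R))ᶜ, k (x - y))
          ∂(volume.restrict (ball (0 : Euc n) R)) :=
          lintegral_congr fun x => lintegral_const_mul' _ _ ENNReal.ofReal_ne_top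
      _ ≤ ∫⁻ x, ENNReal.ofReal (|ψ x| ^ p) * κ ∂(volume.restrict (ball (0 : Euc n) R)) := by
          refine lintegral_mono_ae ?_
          filter_upwards [ae_restrict_mem measurableSet_ball] with x hx
          exact mul_le_mul_right (hker x hx) _
      _ = κ * ∫⁻ x in ball (0 : Euc n) R, ENNReal.ofReal (|ψ x| ^ p) := by
          rw [lintegral_mul_const' _ _ hκfin, mul_comm]
      _ = κ * ∫⁻ x in ball (0 : Euc n) R, ENNReal.ofReal (|φ x| ^ p) := by
          congr 1
          refine lintegral_congr_ae ?_
          filter_upwards [ae_restrict_of_ae hψae] with x hx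
          rw [hx]
      _ ≤ κ * Lp2 := by
          rw [hLp2]
          exact mul_le_mul_right (lintegral_mono_set (ball_subset_ball (by linarith))) _
  have hSB : (∫⁻ z in ball (0 : Euc n) R ×ˢ (ball (0 : Euc n) (2 * R))ᶜ,
      ENNReal.ofReal (|ψ z.2| ^ p) * k (z.1 - z.2)) ≤ Mext ^ p * (κ * volB) := by
    rw [Measure.volume_eq_prod, ← Measure.prod_restrict, lintegral_prod _ hBm.aemeasurable]
    have hMp : Mext ^ p ≠ ∞ := ENNReal.rpow_ne_top_of_nonneg hp0.le hMextfin
    calc ∫⁻ x, (∫⁻ y, ENNReal.ofReal (|ψ y| ^ p) * k (x - y)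
            ∂(volume.restrict (ball (0 : Euc n) (2 * R))ᶜ))
          ∂(volume.restrict (ball (0 : Euc n) R))
        ≤ ∫⁻ _x, Mext ^ p * κ ∂(volume.restrict (ball (0 : Euc n) R)) := by
          refine lintegral_mono_ae ?_
          filter_upwards [ae_restrict_mem measurableSet_ball] with x hx
          calc ∫⁻ y, ENNReal.ofReal (|ψ y| ^ p) * k (x - y)
                ∂(volume.restrict (ball (0 : Euc n) (2 * R))ᶜ)
              ≤ ∫⁻ y, Mext ^ p * k (x - y)
                ∂(volume.restrict (ball (0 : Euc n) (2 * R))ᶜ) := by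
                refine lintegral_mono_ae ?_
                filter_upwards [hMext_ae] with y hy
                refine mul_le_mul_left ?_ _
                rw [hofp]
                exact ENNReal.rpow_le_rpow hy hp0.le
            _ = Mext ^ p * ∫⁻ y in (ball (0 : Euc n) (2 * R))ᶜ, k (x - y) :=
                lintegral_const_mul' _ _ hMp
            _ ≤ Mext ^ p * κ := mul_le_mul_right (hker x hx) _
      _ = Mext ^ p * κ * volB := by rw [setLIntegral_const, hvolB]
      _ = Mext ^ p * (κ * volB) := by ring
  have hT2 : (∫⁻ z in ball (0 : Euc n) R ×ˢ (ball (0 : Euc n) (2 * R))ᶜ, fψ z)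
      ≤ t2 * (κ * Lp2 + Mext ^ p * (κ * volB)) := by
    have hpt : ∀ z : Euc n × Euc n, fψ z ≤
        t2 * (ENNReal.ofReal (|ψ z.1| ^ p) * k (z.1 - z.2) +
          ENNReal.ofReal (|ψ z.2| ^ p) * k (z.1 - z.2)) := by
      intro z
      have h1 : ENNReal.ofReal (|ψ z.1 - ψ z.2| ^ p) ≤
          t2 * (ENNReal.ofReal (|ψ z.1| ^ p) + ENNReal.ofReal (|ψ z.2| ^ p)) := by
        rw [hofp, hofp, hofp]
        refine le_trans (ENNReal.rpow_le_rpow ?_ hp0.le) (add_rpow_le hp0.le _ _)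
        calc ENNReal.ofReal |ψ z.1 - ψ z.2| ≤ ENNReal.ofReal (|ψ z.1| + |ψ z.2|) :=
            ENNReal.ofReal_le_ofReal (abs_sub _ _)
          _ = ENNReal.ofReal |ψ z.1| + ENNReal.ofReal |ψ z.2| :=
            ENNReal.ofReal_add (abs_nonneg _) (abs_nonneg _)
      calc fψ z = ENNReal.ofReal (|ψ z.1 - ψ z.2| ^ p) * k (z.1 - z.2) := by simp only [hfψ]
        _ ≤ (t2 * (ENNReal.ofReal (|ψ z.1| ^ p) + ENNReal.ofReal (|ψ z.2| ^ p))) *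
            k (z.1 - z.2) := mul_le_mul_left h1 _
        _ = t2 * (ENNReal.ofReal (|ψ z.1| ^ p) * k (z.1 - z.2) +
            ENNReal.ofReal (|ψ z.2| ^ p) * k (z.1 - z.2)) := by ring
    calc ∫⁻ z in ball (0 : Euc n) R ×ˢ (ball (0 : Euc n) (2 * R))ᶜ, fψ z
        ≤ ∫⁻ z in ball (0 : Euc n) R ×ˢ (ball (0 : Euc n) (2 * R))ᶜ,
            t2 * (ENNReal.ofReal (|ψ z.1| ^ p) * k (z.1 - z.2) +
              ENNReal.ofReal (|ψ z.2| ^ p) * k (z.1 - z.2)) := lintegral_mono hpt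
      _ = t2 * ((∫⁻ z in ball (0 : Euc n) R ×ˢ (ball (0 : Euc n) (2 * R))ᶜ,
            ENNReal.ofReal (|ψ z.1| ^ p) * k (z.1 - z.2)) +
          ∫⁻ z in ball (0 : Euc n) R ×ˢ (ball (0 : Euc n) (2 * R))ᶜ,
            ENNReal.ofReal (|ψ z.2| ^ p) * k (z.1 - z.2)) := by
          rw [lintegral_const_mul' _ _ ht2fin, lintegral_add_left hAm]
      _ ≤ t2 * (κ * Lp2 + Mext ^ p * (κ * volB)) :=
          mul_le_mul_right (add_le_add hSA hSB) _
  have hT3 : (∫⁻ z in (ball (0 : Euc n) (2 * R))ᶜ ×ˢ ball (0 : Euc n) R, fψ z)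
      ≤ t2 * (κ * Lp2 + Mext ^ p * (κ * volB)) := by
    rw [lintegral_swap_prod_set hfψm hfψsym]
    exact hT2
  -- the full ψ-part over D
  have hIψ : (∫⁻ z in D, fψ z) ≤ G + 2 * (t2 * (κ * Lp2 + Mext ^ p * (κ * volB))) := by
    have hsub : D ⊆ (ball (0 : Euc n) (2 * R) ×ˢ ball (0 : Euc n) (2 * R)) ∪
        ((ball (0 : Euc n) R ×ˢ (ball (0 : Euc n) (2 * R))ᶜ) ∪
          ((ball (0 : Euc n) (2 * R))ᶜ ×ˢ ball (0 : Euc n) R)) := by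
      rintro ⟨x, y⟩ (h | h)
      · by_cases hy : y ∈ ball (0 : Euc n) (2 * R)
        · exact Or.inl ⟨ball_subset_ball (by linarith) h, hy⟩
        · exact Or.inr (Or.inl ⟨h, hy⟩)
      · by_cases hx : x ∈ ball (0 : Euc n) (2 * R)
        · exact Or.inl ⟨hx, ball_subset_ball (by linarith) h⟩
        · exact Or.inr (Or.inr ⟨hx, h⟩)
    calc ∫⁻ z in D, fψ z
        ≤ ∫⁻ z in (ball (0 : Euc n) (2 * R) ×ˢ ball (0 : Euc n) (2 * R)) ∪
            ((ball (0 : Euc n) R ×ˢ (ball (0 : Euc n) (2 * R))ᶜ) ∪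
              ((ball (0 : Euc n) (2 * R))ᶜ ×ˢ ball (0 : Euc n) R)), fψ z :=
          lintegral_mono_set hsub
      _ ≤ (∫⁻ z in ball (0 : Euc n) (2 * R) ×ˢ ball (0 : Euc n) (2 * R), fψ z) +
          ∫⁻ z in (ball (0 : Euc n) R ×ˢ (ball (0 : Euc n) (2 * R))ᶜ) ∪
            ((ball (0 : Euc n) (2 * R))ᶜ ×ˢ ball (0 : Euc n) R), fψ z :=
          lintegral_union_le _ _ _
      _ ≤ (∫⁻ z in ball (0 : Euc n) (2 * R) ×ˢ ball (0 : Euc n) (2 * R), fψ z) +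
          ((∫⁻ z in ball (0 : Euc n) R ×ˢ (ball (0 : Euc n) (2 * R))ᶜ, fψ z) +
            ∫⁻ z in (ball (0 : Euc n) (2 * R))ᶜ ×ˢ ball (0 : Euc n) R, fψ z) :=
          add_le_add_right (lintegral_union_le _ _ _) _
      _ ≤ G + 2 * (t2 * (κ * Lp2 + Mext ^ p * (κ * volB))) := by
          rw [hT1, two_mul (t2 * (κ * Lp2 + Mext ^ p * (κ * volB)))]
          exact add_le_add_right (add_le_add hT2 hT3) _
  -- the η-part over D
  have hgm : Measurable fun z : Euc n × Euc n =>
      ENNReal.ofReal ((min ‖z.1 - z.2‖ R) ^ p) * k (z.1 - z.2) := by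
    refine Measurable.mul (Measurable.ennreal_ofReal (by fun_prop)) ?_
    exact hkm.comp (measurable_fst.sub measurable_snd)
  have hgsym : ∀ z : Euc n × Euc n,
      ENNReal.ofReal ((min ‖(Prod.swap z).1 - (Prod.swap z).2‖ R) ^ p) *
        k ((Prod.swap z).1 - (Prod.swap z).2) =
      ENNReal.ofReal ((min ‖z.1 - z.2‖ R) ^ p) * k (z.1 - z.2) := by
    intro z
    simp only [hk, Prod.fst_swap, Prod.snd_swap]
    rw [norm_sub_rev z.2 z.1]
  have hPartA : (∫⁻ z in ball (0 : Euc n) R ×ˢ (univ : Set (Euc n)),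
      ENNReal.ofReal ((min ‖z.1 - z.2‖ R) ^ p) * k (z.1 - z.2)) = JG * volB := by
    rw [Measure.volume_eq_prod, ← Measure.prod_restrict, Measure.restrict_univ,
      lintegral_prod _ hgm.aemeasurable]
    have hinner : ∀ x : Euc n,
        (∫⁻ y : Euc n, ENNReal.ofReal ((min ‖x - y‖ R) ^ p) * k (x - y)) = JG := by
      intro x
      rw [hJGdef]
      simp only [hk]
      have hrev : ∀ y : Euc n, ‖x - y‖ = ‖y - x‖ := fun y => norm_sub_rev _ _
      simp_rw [hrev]
      exact (measurePreserving_sub_right volume x).lintegral_comp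
        (f := fun z : Euc n => ENNReal.ofReal ((min ‖z‖ R) ^ p) *
          ENNReal.ofReal (‖z‖ ^ (-q))) (by fun_prop)
    calc ∫⁻ x, (∫⁻ y : Euc n, ENNReal.ofReal ((min ‖x - y‖ R) ^ p) * k (x - y))
          ∂(volume.restrict (ball (0 : Euc n) R))
        = ∫⁻ _x, JG ∂(volume.restrict (ball (0 : Euc n) R)) := lintegral_congr hinner
      _ = JG * volB := by rw [setLIntegral_const, hvolB]
  have hIη : (∫⁻ z in D, ENNReal.ofReal ((min ‖z.1 - z.2‖ R) ^ p) * k (z.1 - z.2))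
      ≤ 2 * (JG * volB) := by
    have hsub : D ⊆ (ball (0 : Euc n) R ×ˢ (univ : Set (Euc n))) ∪
        ((univ : Set (Euc n)) ×ˢ ball (0 : Euc n) R) := by
      rintro ⟨x, y⟩ (h | h)
      · exact Or.inl ⟨h, mem_univ _⟩
      · exact Or.inr ⟨mem_univ _, h⟩
    calc ∫⁻ z in D, ENNReal.ofReal ((min ‖z.1 - z.2‖ R) ^ p) * k (z.1 - z.2)
        ≤ ∫⁻ z in (ball (0 : Euc n) R ×ˢ (univ : Set (Euc n))) ∪
            ((univ : Set (Euc n)) ×ˢ ball (0 : Euc n) R),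
            ENNReal.ofReal ((min ‖z.1 - z.2‖ R) ^ p) * k (z.1 - z.2) :=
          lintegral_mono_set hsub
      _ ≤ (∫⁻ z in ball (0 : Euc n) R ×ˢ (univ : Set (Euc n)),
            ENNReal.ofReal ((min ‖z.1 - z.2‖ R) ^ p) * k (z.1 - z.2)) +
          ∫⁻ z in (univ : Set (Euc n)) ×ˢ ball (0 : Euc n) R,
            ENNReal.ofReal ((min ‖z.1 - z.2‖ R) ^ p) * k (z.1 - z.2) :=
          lintegral_union_le _ _ _
      _ = (JG * volB) + (JG * volB) := by
          rw [hPartA, lintegral_swap_prod_set hgm hgsym, hPartA]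
      _ = 2 * (JG * volB) := (two_mul _).symm
  -- the key estimate for admissible shift parameters c
  have key : ∀ c : ℝ, 0 < c → c ≤ 1 →
      (∀ᵐ x ∂(volume : Measure (Euc n)), x ∈ ball 0 R → ψ x + c * η x ∉ T) →
      energy n F W u (ball 0 R) ≤ X + ENNReal.ofReal c * Y := by
    intro c hc0 hc1 hgood
    set v : Euc n → ℝ := fun x => ψ x + c * η x with hv
    have hvm : Measurable v := hψm.add (measurable_const.mul hηm)
    have hvu : ∀ᵐ x ∂(volume.restrict (ball (0 : Euc n) R)ᶜ), v x = u x := by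
      filter_upwards [ae_restrict_of_ae hψae, ae_restrict_mem measurableSet_ball.compl]
        with x hx1 hx2
      simp only [hv]
      rw [hη0 x hx2, mul_zero, add_zero, ← hx1, hub x hx2]
    have hcomp := hmin.2.2 v hvm hvu
    have hWterm : (∫⁻ x in ball (0 : Euc n) R, ENNReal.ofReal (W (v x))) ≤ MW * volB := by
      have hb : ∀ᵐ x ∂(volume.restrict (ball (0 : Euc n) R)),
          ENNReal.ofReal (W (v x)) ≤ MW := by
        filter_upwards [ae_restrict_mem measurableSet_ball, ae_restrict_of_ae hgood]
          with x hx1 hx2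
        simp only [hv]
        exact hWle _ (hx2 hx1)
      calc ∫⁻ x in ball (0 : Euc n) R, ENNReal.ofReal (W (v x))
          ≤ ∫⁻ _x in ball (0 : Euc n) R, MW := lintegral_mono_ae hb
        _ = MW * volB := by rw [setLIntegral_const, hvolB]
    have hptF : ∀ᵐ z : Euc n × Euc n ∂(volume : Measure (Euc n × Euc n)).restrict D,
        ENNReal.ofReal (F (v z.1 - v z.2) (z.1 - z.2)) ≤
          ENNReal.ofReal cS * t2 * (fψ z + ENNReal.ofReal c ^ p *
            (ENNReal.ofReal ((min ‖z.1 - z.2‖ R) ^ p) * k (z.1 - z.2))) := by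
      filter_upwards [ae_restrict_of_ae hne] with z hz
      have hzne : z.1 - z.2 ≠ 0 := sub_ne_zero.2 hz
      have hF := (hFb (v z.1 - v z.2) (z.1 - z.2) hzne).2
      have e1 : ENNReal.ofReal (F (v z.1 - v z.2) (z.1 - z.2)) ≤
          ENNReal.ofReal cS * (ENNReal.ofReal (|v z.1 - v z.2| ^ p) * k (z.1 - z.2)) := by
        refine (ENNReal.ofReal_le_ofReal hF).trans (le_of_eq ?_)
        rw [ENNReal.ofReal_mul hcS.le, hdiv _ (Real.rpow_nonneg (abs_nonneg _) p)]
      refine e1.trans ?_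
      have e2 : ENNReal.ofReal (|v z.1 - v z.2| ^ p) ≤
          t2 * (ENNReal.ofReal (|ψ z.1 - ψ z.2| ^ p) +
            ENNReal.ofReal c ^ p * ENNReal.ofReal ((min ‖z.1 - z.2‖ R) ^ p)) := by
        rw [hofp]
        have habs : |v z.1 - v z.2| ≤ |ψ z.1 - ψ z.2| + c * |η z.1 - η z.2| := by
          have hre : v z.1 - v z.2 = (ψ z.1 - ψ z.2) + c * (η z.1 - η z.2) := by
            simp only [hv]; ring
          rw [hre]
          refine (abs_add_le _ _).trans ?_
          rw [abs_mul, abs_of_pos hc0]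
        have h1 : ENNReal.ofReal |v z.1 - v z.2| ≤
            ENNReal.ofReal |ψ z.1 - ψ z.2| + ENNReal.ofReal (c * |η z.1 - η z.2|) := by
          refine (ENNReal.ofReal_le_ofReal habs).trans (le_of_eq ?_)
          exact ENNReal.ofReal_add (abs_nonneg _) (by positivity)
        calc ENNReal.ofReal |v z.1 - v z.2| ^ p
            ≤ (ENNReal.ofReal |ψ z.1 - ψ z.2| + ENNReal.ofReal (c * |η z.1 - η z.2|)) ^ p :=
              ENNReal.rpow_le_rpow h1 hp0.le
          _ ≤ t2 * (ENNReal.ofReal |ψ z.1 - ψ z.2| ^ p +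
              ENNReal.ofReal (c * |η z.1 - η z.2|) ^ p) := add_rpow_le hp0.le _ _
          _ ≤ t2 * (ENNReal.ofReal (|ψ z.1 - ψ z.2| ^ p) +
              ENNReal.ofReal c ^ p * ENNReal.ofReal ((min ‖z.1 - z.2‖ R) ^ p)) := by
              refine mul_le_mul_right (add_le_add (le_of_eq (hofp _).symm) ?_) t2
              rw [ENNReal.ofReal_mul hc0.le, ENNReal.mul_rpow_of_nonneg _ _ hp0.le,
                ← ENNReal.ofReal_rpow_of_nonneg (le_min (norm_nonneg _) hR.le) hp0.le]
              refine mul_le_mul_right ?_ _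
              exact ENNReal.rpow_le_rpow (ENNReal.ofReal_le_ofReal (hηbd _ _)) hp0.le
      calc ENNReal.ofReal cS * (ENNReal.ofReal (|v z.1 - v z.2| ^ p) * k (z.1 - z.2))
          ≤ ENNReal.ofReal cS * ((t2 * (ENNReal.ofReal (|ψ z.1 - ψ z.2| ^ p) +
              ENNReal.ofReal c ^ p * ENNReal.ofReal ((min ‖z.1 - z.2‖ R) ^ p))) *
                k (z.1 - z.2)) :=
            mul_le_mul_right (mul_le_mul_left e2 _) _
        _ = ENNReal.ofReal cS * t2 * (fψ z + ENNReal.ofReal c ^ p *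
            (ENNReal.ofReal ((min ‖z.1 - z.2‖ R) ^ p) * k (z.1 - z.2))) := by
            simp only [hfψ]; ring
    have hIint : interaction n F v (ball 0 R) ≤
        ENNReal.ofReal cS * t2 * ((∫⁻ z in D, fψ z) + ENNReal.ofReal c ^ p *
          ∫⁻ z in D, ENNReal.ofReal ((min ‖z.1 - z.2‖ R) ^ p) * k (z.1 - z.2)) := by
      have hcSt2 : ENNReal.ofReal cS * t2 ≠ ∞ :=
        (ENNReal.mul_lt_top ENNReal.ofReal_lt_top ht2fin.lt_top).ne
      have hcp : ENNReal.ofReal c ^ p ≠ ∞ :=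
        ENNReal.rpow_ne_top_of_nonneg hp0.le ENNReal.ofReal_ne_top
      calc interaction n F v (ball 0 R)
          = ∫⁻ z in D, ENNReal.ofReal (F (v z.1 - v z.2) (z.1 - z.2)) := by
            simp only [interaction, hD]
        _ ≤ ∫⁻ z in D, ENNReal.ofReal cS * t2 * (fψ z + ENNReal.ofReal c ^ p *
            (ENNReal.ofReal ((min ‖z.1 - z.2‖ R) ^ p) * k (z.1 - z.2))) :=
            lintegral_mono_ae hptF
        _ = ENNReal.ofReal cS * t2 * ((∫⁻ z in D, fψ z) + ENNReal.ofReal c ^ p *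
            ∫⁻ z in D, ENNReal.ofReal ((min ‖z.1 - z.2‖ R) ^ p) * k (z.1 - z.2)) := by
            rw [lintegral_const_mul' _ _ hcSt2, lintegral_add_left hfψm,
              lintegral_const_mul' _ _ hcp]
    have hcp1 : ENNReal.ofReal c ^ p ≤ ENNReal.ofReal c := by
      calc ENNReal.ofReal c ^ p ≤ ENNReal.ofReal c ^ (1 : ℝ) :=
          ENNReal.rpow_le_rpow_of_exponent_ge (ENNReal.ofReal_le_one.2 hc1) hp
        _ = ENNReal.ofReal c := ENNReal.rpow_one _
    calc energy n F W u (ball 0 R) ≤ energy n F W v (ball 0 R) := hcomp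
      _ = interaction n F v (ball 0 R) +
          ∫⁻ x in ball (0 : Euc n) R, ENNReal.ofReal (W (v x)) := rfl
      _ ≤ (ENNReal.ofReal cS * t2 * ((∫⁻ z in D, fψ z) + ENNReal.ofReal c ^ p *
            ∫⁻ z in D, ENNReal.ofReal ((min ‖z.1 - z.2‖ R) ^ p) * k (z.1 - z.2))) +
          MW * volB := add_le_add hIint hWterm
      _ ≤ (ENNReal.ofReal cS * t2 *
            ((G + 2 * (t2 * (κ * Lp2 + Mext ^ p * (κ * volB)))) +
              ENNReal.ofReal c * (2 * (JG * volB)))) + MW * volB := by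
          gcongr
      _ = X + ENNReal.ofReal c * Y := by rw [hX, hY]; ring
  -- pass to the limit c → 0
  have hYfin : Y ≠ ∞ := by
    rw [hY]
    exact (ENNReal.mul_lt_top (ENNReal.mul_lt_top ENNReal.ofReal_lt_top ht2fin.lt_top)
      (ENNReal.mul_lt_top (by norm_num) (ENNReal.mul_lt_top hJGfin hvolBfin.lt_top))).ne
  have hEX : energy n F W u (ball 0 R) ≤ X := by
    refine ENNReal.le_of_forall_pos_le_add fun ε hε hXfin => ?_
    obtain ⟨t, ht0, htY⟩ : ∃ t : ℝ, 0 < t ∧ ENNReal.ofReal t * Y ≤ (ε : ℝ≥0∞) := by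
      rcases eq_or_ne Y 0 with hY0 | hY0
      · exact ⟨1, one_pos, by simp [hY0]⟩
      · have hdivfin : (ε : ℝ≥0∞) / Y ≠ ∞ := (ENNReal.div_lt_top (by simp) hY0).ne
        refine ⟨((ε : ℝ≥0∞) / Y).toReal, ?_, ?_⟩
        · refine ENNReal.toReal_pos ?_ hdivfin
          exact (ENNReal.div_pos (by exact_mod_cast hε.ne' : (ε : ℝ≥0∞) ≠ 0) hYfin).ne'
        · rw [ENNReal.ofReal_toReal hdivfin, ENNReal.div_mul_cancel hY0 hYfin]
    obtain ⟨c, hc0, hct, hgood⟩ := good_c_exists hTm hT0 hψm hηm measurableSet_ball hηne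
      (lt_min ht0 one_pos : (0 : ℝ) < min t 1)
    have hc1 : c ≤ 1 := le_of_lt (lt_of_lt_of_le hct (min_le_right _ _))
    calc energy n F W u (ball 0 R) ≤ X + ENNReal.ofReal c * Y := key c hc0 hc1 hgood
      _ ≤ X + (ε : ℝ≥0∞) := by
          refine add_le_add_right ?_ X
          calc ENNReal.ofReal c * Y ≤ ENNReal.ofReal t * Y :=
              mul_le_mul_left (ENNReal.ofReal_le_ofReal
                (le_of_lt (lt_of_lt_of_le hct (min_le_left _ _)))) _
            _ ≤ (ε : ℝ≥0∞) := htY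
  -- conclude
  have hGle : G ≤ Ssum := by
    rw [hSsum]
    have h1 : G ≤ WspNormP n s p φ (ball 0 (2 * R)) := by
      rw [WspNormP, hG]
      exact self_le_add_left _ _
    exact h1.trans (le_trans (self_le_add_right _ _) (self_le_add_right _ _))
  have hLple : Lp2 ≤ Ssum := by
    rw [hSsum]
    have h1 : Lp2 ≤ WspNormP n s p φ (ball 0 (2 * R)) := by
      rw [WspNormP, hLp2]
      exact self_le_add_right _ _
    exact h1.trans (le_trans (self_le_add_right _ _) (self_le_add_right _ _))
  have hMextle : Mext ^ p ≤ Ssum := by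
    rw [hSsum, hMext]
    exact le_trans (self_le_add_left _ _) (self_le_add_right _ _)
  have hMWle : MW ≤ Ssum := by
    rw [hSsum, hMW]
    exact self_le_add_left _ _
  calc energy n F W u (ball 0 R) ≤ X := hEX
    _ ≤ ENNReal.ofReal cS * t2 * (Ssum + 2 * (t2 * (κ * Ssum + Ssum * (κ * volB)))) + Ssum * volB := by
        rw [hX]
        gcongr
    _ = 𝒞 * Ssum := by rw [h𝒞]; ring
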